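/- For all positive integers m and n, the polynomial Ω_{mn}(x) divides Ω_n(T_m(x)) in ℝ[x]. -/

import Mathlib

open Polynomial Polynomial.Chebyshev

noncomputable def Omega (d : ℕ) : Polynomial ℝ :=
  if d = 1 then Polynomial.X - 1
  else ∏ k ∈ (Finset.range (d + 1)).filter (fun k => 1 ≤ k ∧ 2 * k ≤ d ∧ Nat.gcd k d = 1),
    (Polynomial.C 2 * (Polynomial.X - Polynomial.C (Real.cos (2 * k * Real.pi / d))))

/-- If `gcd k n = 1` then `cos (2kπ/n)` is a root of `Omega n`. -/
lemma omega_root_aux (n k : ℕ) (hn : 0 < n) (hk : Nat.gcd k n = 1) :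
    (Omega n).eval (Real.cos (2 * k * Real.pi / n)) = 0 := by
  rcases eq_or_ne n 1 with rfl | hn1
  · have h1 : (2 * (k : ℝ) * Real.pi / (1 : ℕ)) = (k : ℝ) * (2 * Real.pi) := by
      push_cast; ring
    rw [Omega, if_pos rfl, h1]
    simp [Real.cos_nat_mul_two_pi]
  · have hn2 : 2 ≤ n := by omega
    rw [Omega, if_neg hn1, eval_prod]
    set r := k % n with hr
    have hrn : r < n := Nat.mod_lt _ hn
    have hgr : Nat.gcd r n = 1 := by
      rw [hr, ← Nat.gcd_rec, Nat.gcd_comm]; exact hk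
    have hr0 : 1 ≤ r := by
      rcases Nat.eq_zero_or_pos r with h0 | h0
      · rw [h0] at hgr; simp [Nat.gcd_comm] at hgr; omega
      · exact h0
    have hcosr : Real.cos (2 * k * Real.pi / n) = Real.cos (2 * r * Real.pi / n) := by
      obtain ⟨q, hd⟩ : ∃ q, k = r + n * q :=
        ⟨k / n, by rw [hr]; exact (Nat.mod_add_div k n).symm⟩
      have hkeq : (k : ℝ) = (r : ℝ) + (n : ℝ) * (q : ℝ) := by
        rw [hd]; push_cast; ring
      have hnr : (n : ℝ) ≠ 0 := by positivity
      have harg : 2 * (k : ℝ) * Real.pi / n =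
          2 * (r : ℝ) * Real.pi / n + ((q : ℤ) : ℝ) * (2 * Real.pi) := by
        rw [hkeq]
        push_cast
        field_simp
      rw [harg, Real.cos_add_int_mul_two_pi]
    -- choose the representative j in [1, n/2]
    obtain ⟨j, hj1, hj2, hjg, hjcos⟩ :
        ∃ j, 1 ≤ j ∧ 2 * j ≤ n ∧ Nat.gcd j n = 1 ∧
          Real.cos (2 * j * Real.pi / n) = Real.cos (2 * k * Real.pi / n) := by
      rcases le_or_gt (2 * r) n with hle | hlt
      · exact ⟨r, hr0, hle, hgr, hcosr.symm⟩
      · refine ⟨n - r, by omega, by omega, ?_, ?_⟩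
        · exact (Nat.coprime_self_sub_left hrn.le).mpr hgr
        · rw [hcosr]
          have hsub : 2 * ((n - r : ℕ) : ℝ) * Real.pi / n =
              2 * Real.pi - 2 * (r : ℝ) * Real.pi / n := by
            have : ((n - r : ℕ) : ℝ) = (n : ℝ) - (r : ℝ) := by
              push_cast [Nat.cast_sub hrn.le]; ring
            rw [this]; field_simp
          rw [hsub, Real.cos_two_pi_sub]
    refine Finset.prod_eq_zero (i := j) ?_ ?_
    · simp only [Finset.mem_filter, Finset.mem_range]
      exact ⟨by omega, hj1, hj2, hjg⟩
    · rw [hjcos]; simp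

theorem omega_mul_dvd_omega_comp (m n : ℕ) (hm : 0 < m) (hn : 0 < n) :
    Omega (m * n) ∣ (Omega n).comp (T ℝ m) := by
  rcases eq_or_ne (m * n) 1 with h1 | h1
  · have hm1 : m = 1 := Nat.le_antisymm (Nat.le_of_dvd one_pos ⟨n, h1.symm⟩) hm
    have hn1 : n = 1 := Nat.le_antisymm
      (Nat.le_of_dvd one_pos ⟨m, by rw [← h1, mul_comm]⟩) hn
    subst hm1; subst hn1
    simp
  · have hmn : 0 < m * n := Nat.mul_pos hm hn
    rw [Omega, if_neg h1]
    apply Finset.prod_dvd_of_coprime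
    · -- pairwise coprime
      intro a ha b hb hab
      simp only [Finset.coe_filter, Set.mem_setOf_eq, Finset.mem_range] at ha hb
      have hmem : ∀ c : ℕ, 1 ≤ c → 2 * c ≤ m * n →
          2 * (c : ℝ) * Real.pi / (m * n : ℕ) ∈ Set.Icc 0 Real.pi := by
        intro c hc1 hc2
        constructor
        · positivity
        · rw [div_le_iff₀ (by positivity)]
          have : (2 * c : ℝ) ≤ (m * n : ℕ) := by exact_mod_cast hc2
          nlinarith [Real.pi_pos]
      have hane : Real.cos (2 * a * Real.pi / (m * n : ℕ)) ≠
          Real.cos (2 * b * Real.pi / (m * n : ℕ)) := by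
        intro hEq
        have h := Real.injOn_cos (hmem a ha.2.1 ha.2.2.1) (hmem b hb.2.1 hb.2.2.1) hEq
        have hmn' : ((m * n : ℕ) : ℝ) ≠ 0 := by positivity
        field_simp [Real.pi_ne_zero] at h
        exact hab (by exact_mod_cast h)
      apply (isCoprime_mul_unit_left_left (isUnit_C.mpr (by norm_num : IsUnit (2:ℝ))) _ _).2
      apply (isCoprime_mul_unit_left_right (isUnit_C.mpr (by norm_num : IsUnit (2:ℝ))) _ _).2
      have hsub : Real.cos (2 * a * Real.pi / (m * n : ℕ)) -
          Real.cos (2 * b * Real.pi / (m * n : ℕ)) ≠ 0 := sub_ne_zero.mpr hane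
      exact Polynomial.isCoprime_X_sub_C_of_isUnit_sub hsub.isUnit
    · -- each factor divides
      intro k hk
      simp only [Finset.mem_filter, Finset.mem_range] at hk
      obtain ⟨-, hk1, hk2, hkg⟩ := hk
      rw [(isUnit_C.mpr (by norm_num : IsUnit (2:ℝ))).mul_left_dvd,
        Polynomial.dvd_iff_isRoot]
      have hkn : Nat.gcd k n = 1 :=
        Nat.Coprime.coprime_dvd_right (dvd_mul_left n m) hkg
      have heval : (T ℝ m).eval (Real.cos (2 * k * Real.pi / (m * n : ℕ))) =
          Real.cos (2 * k * Real.pi / n) := by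
        rw [T_real_cos]
        congr 1
        have hm' : (m : ℝ) ≠ 0 := by positivity
        have hn' : (n : ℝ) ≠ 0 := by positivity
        push_cast
        field_simp
      rw [IsRoot, eval_comp, heval]
      exact omega_root_aux n k hn hkn
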